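/- Let λ̂, μ̂₁, μ̂₂, λ̂₀, λ̂₁, λ̂₂ > 0 with λ̂ = λ̂₀+λ̂₁+λ̂₂ and ρ = λ̂/(μ̂₁+μ̂₂) < 1. With z = ρ⁻², the quadratic φ₋(η) = η²(μ̂₁ + (λ̂₀+λ̂₂)z) − η(λ̂+μ̂₁+μ̂₂) + μ̂₂z⁻¹ + λ̂₁ has the two roots η = ρ and η = ργ₂/(γ₁+λ̂₀), where γ₁ = μ̂₁ρ²+λ̂₂ and γ₂ = μ̂₂ρ²+λ̂₁. -/

import Mathlib

theorem phi_minus_roots_at_rho_inv_sq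
    (lamh mu1h mu2h lam0h lam1h lam2h rho gam1 gam2 z : ℝ)
    (h0 : 0 < lam0h) (h1 : 0 < lam1h) (h2 : 0 < lam2h)
    (hm1 : 0 < mu1h) (hm2 : 0 < mu2h)
    (hlam : lamh = lam0h + lam1h + lam2h)
    (hrho : rho = lamh / (mu1h + mu2h)) (hrho1 : rho < 1)
    (hg1 : gam1 = mu1h * rho ^ 2 + lam2h)
    (hg2 : gam2 = mu2h * rho ^ 2 + lam1h)
    (hz : z = rho⁻¹ ^ 2) :
    ∀ eta : ℝ,
      eta ^ 2 * (mu1h + (lam0h + lam2h) * z) - eta * (lamh + mu1h + mu2h)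
          + mu2h * z⁻¹ + lam1h = 0 ↔
        eta = rho ∨ eta = rho * gam2 / (gam1 + lam0h) := by
  have hmsum : (0:ℝ) < mu1h + mu2h := by linarith
  have hrpos : 0 < rho := by
    rw [hrho, hlam]; positivity
  have hrne : rho ≠ 0 := ne_of_gt hrpos
  have hr : rho * (mu1h + mu2h) = lam0h + lam1h + lam2h := by
    rw [hrho]; field_simp; linarith
  have hdpos : 0 < gam1 + lam0h := by
    rw [hg1]; positivity
  have hdne : gam1 + lam0h ≠ 0 := ne_of_gt hdpos
  have hApos : 0 < mu1h + (lam0h + lam2h) * z := by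
    rw [hz]; positivity
  intro eta
  have key : eta ^ 2 * (mu1h + (lam0h + lam2h) * z) - eta * (lamh + mu1h + mu2h)
      + mu2h * z⁻¹ + lam1h
      = (mu1h + (lam0h + lam2h) * z) * ((eta - rho) * (eta - rho * gam2 / (gam1 + lam0h))) := by
    subst hz hg1 hg2 hlam
    rw [show ((rho⁻¹:ℝ) ^ 2)⁻¹ = rho ^ 2 by simp]
    field_simp
    linear_combination (eta * rho * (rho - 1) * (mu1h * rho ^ 2 + lam2h + lam0h)) * hr
  rw [key, mul_eq_zero, mul_eq_zero, sub_eq_zero, sub_eq_zero]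
  simp [ne_of_gt hApos]
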